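/- Let H be a real Hilbert space, let F : H → H be firmly nonexpansive, let (x_k) be a sequence in H, and let C, D ⊆ H be closed affine subspaces such that C − C = (D − D)^⊥. Suppose that x_k ⇀ x, F(x_k) ⇀ y, F(x_k) − P_C(F(x_k)) → 0 strongly, and (x_k − F(x_k)) − P_D(x_k − F(x_k)) → 0 strongly. Then y ∈ C, x ∈ y + D, and y = F(x). -/

import Mathlib

open scoped InnerProductSpace Pointwise

open Filter

section Helpers

variable {E : Type*} [NormedAddCommGroup E] [InnerProductSpace ℝ E] [CompleteSpace E]

lemma weak_conv_bounded (a : ℕ → E) (l : E)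
    (h : ∀ u : E, Tendsto (fun k => ⟪a k, u⟫_ℝ) atTop (nhds ⟪l, u⟫_ℝ)) :
    ∃ M : ℝ, ∀ k, ‖a k‖ ≤ M := by
  have hb : ∀ u : E, ∃ C, ∀ k, ‖(innerSL ℝ (a k)) u‖ ≤ C := by
    intro u
    obtain ⟨C, hC⟩ := ((h u).norm).bddAbove_range
    exact ⟨C, fun k => hC ⟨k, rfl⟩⟩
  obtain ⟨M, hM⟩ := banach_steinhaus hb
  exact ⟨M, fun k => by simpa [innerSL_apply_norm] using hM k⟩

lemma proj_char (C : Set E) (hCne : C.Nonempty) (hCconv : Convex ℝ C)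
    (P : E → E) (hP : ∀ z, P z ∈ C ∧ ∀ c ∈ C, ‖z - P z‖ ≤ ‖z - c‖)
    (z : E) : ∀ c ∈ C, ⟪z - P z, c - P z⟫_ℝ ≤ 0 := by
  have hPz := hP z
  have hinf : ‖z - P z‖ = ⨅ w : C, ‖z - (w : E)‖ := by
    haveI : Nonempty C := hCne.to_subtype
    refine le_antisymm (le_ciInf fun w => hPz.2 w w.2) ?_
    exact ciInf_le ⟨0, by rintro _ ⟨w, rfl⟩; positivity⟩ (⟨P z, hPz.1⟩ : C)
  exact (norm_eq_iInf_iff_real_inner_le_zero hCconv hPz.1).mp hinf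

lemma weak_limit_mem (C : Set E) (hCne : C.Nonempty) (hCconv : Convex ℝ C)
    (P : E → E) (hP : ∀ z, P z ∈ C ∧ ∀ c ∈ C, ‖z - P z‖ ≤ ‖z - c‖)
    (c : ℕ → E) (hc : ∀ k, c k ∈ C) (y : E)
    (h : ∀ u : E, Tendsto (fun k => ⟪c k, u⟫_ℝ) atTop (nhds ⟪y, u⟫_ℝ)) :
    y ∈ C := by
  set p := P y with hp
  have hle : ∀ k, ⟪y - p, c k - p⟫_ℝ ≤ 0 := fun k =>
    proj_char C hCne hCconv P hP y (c k) (hc k)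
  have htd : Tendsto (fun k => ⟪y - p, c k - p⟫_ℝ) atTop (nhds ⟪y - p, y - p⟫_ℝ) := by
    have : ∀ k, ⟪y - p, c k - p⟫_ℝ = ⟪c k, y - p⟫_ℝ - ⟪p, y - p⟫_ℝ := by
      intro k
      rw [inner_sub_right, real_inner_comm, real_inner_comm p]
    simp_rw [this]
    have h2 : ⟪y - p, y - p⟫_ℝ = ⟪y, y - p⟫_ℝ - ⟪p, y - p⟫_ℝ := by
      rw [inner_sub_left]
    rw [h2]
    exact (h (y - p)).sub tendsto_const_nhds
  have hfin : ⟪y - p, y - p⟫_ℝ ≤ 0 := le_of_tendsto htd (Eventually.of_forall hle)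
  have hz : y - p = 0 := by
    have := re_inner_self_nonpos (𝕜 := ℝ) (x := y - p)
    simp only [RCLike.re_to_real] at this
    exact this.mp hfin
  have : y = p := by rwa [sub_eq_zero] at hz
  rw [this]; exact (hP y).1

end Helpers

/-- Demiclosedness principle for a firmly nonexpansive mapping and a pair of
closed affine subspaces `C`, `D` with `C − C = (D − D)ᗮ`. -/
theorem demiclosedness_firmly_nonexpansive_affine {E : Type*} [NormedAddCommGroup E]
    [InnerProductSpace ℝ E] [CompleteSpace E]
    (F : E → E) (hF : ∀ x y, ⟪x - y, F x - F y⟫_ℝ ≥ ‖F x - F y‖ ^ 2)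
    (C D : Set E) (hCne : C.Nonempty) (hDne : D.Nonempty)
    (hCcl : IsClosed C) (hDcl : IsClosed D)
    (hCaff : ∀ x ∈ C, ∀ y ∈ C, ∀ t : ℝ, t • x + (1 - t) • y ∈ C)
    (hDaff : ∀ x ∈ D, ∀ y ∈ D, ∀ t : ℝ, t • x + (1 - t) • y ∈ D)
    (hperp : C - C = {v : E | ∀ w ∈ D - D, ⟪v, w⟫_ℝ = 0})
    (PC PD : E → E)
    (hPC : ∀ z, PC z ∈ C ∧ ∀ c ∈ C, ‖z - PC z‖ ≤ ‖z - c‖)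
    (hPD : ∀ z, PD z ∈ D ∧ ∀ d ∈ D, ‖z - PD z‖ ≤ ‖z - d‖)
    (x : ℕ → E) (xl y : E)
    (h1 : ∀ u : E, Filter.Tendsto (fun k => ⟪x k, u⟫_ℝ) Filter.atTop (nhds ⟪xl, u⟫_ℝ))
    (h2 : ∀ u : E, Filter.Tendsto (fun k => ⟪F (x k), u⟫_ℝ) Filter.atTop (nhds ⟪y, u⟫_ℝ))
    (h3 : Filter.Tendsto (fun k => F (x k) - PC (F (x k))) Filter.atTop (nhds 0))
    (h4 : Filter.Tendsto (fun k => (x k - F (x k)) - PD (x k - F (x k)))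
      Filter.atTop (nhds 0)) :
    y ∈ C ∧ (∃ d ∈ D, xl = y + d) ∧ y = F xl := by
  -- convexity
  have hCconv : Convex ℝ C := by
    intro a ha b hb s t hs ht hst
    have h := hCaff a ha b hb s
    have : t = 1 - s := by linarith
    rw [this]; exact h
  have hDconv : Convex ℝ D := by
    intro a ha b hb s t hs ht hst
    have h := hDaff a ha b hb s
    have : t = 1 - s := by linarith
    rw [this]; exact h
  -- residuals
  set e : ℕ → E := fun k => F (x k) - PC (F (x k)) with he
  set f : ℕ → E := fun k => (x k - F (x k)) - PD (x k - F (x k)) with hf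
  -- weak convergence of PC (F (x k)) to y
  have hPCweak : ∀ u : E, Tendsto (fun k => ⟪PC (F (x k)), u⟫_ℝ) atTop (nhds ⟪y, u⟫_ℝ) := by
    intro u
    have he0 : Tendsto (fun k => ⟪e k, u⟫_ℝ) atTop (nhds 0) := by
      have := Filter.Tendsto.inner (𝕜 := ℝ) h3 (tendsto_const_nhds (x := u))
      simpa using this
    have : Tendsto (fun k => ⟪F (x k), u⟫_ℝ - ⟪e k, u⟫_ℝ) atTop (nhds (⟪y, u⟫_ℝ - 0)) :=
      (h2 u).sub he0
    rw [sub_zero] at this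
    refine this.congr fun k => ?_
    simp only [he, inner_sub_left]; ring
  have hyC : y ∈ C := weak_limit_mem C hCne hCconv PC hPC _ (fun k => (hPC _).1) y hPCweak
  -- weak convergence of PD (x k - F (x k)) to xl - y
  have hxmFweak : ∀ u : E, Tendsto (fun k => ⟪x k - F (x k), u⟫_ℝ) atTop
      (nhds ⟪xl - y, u⟫_ℝ) := by
    intro u
    have := (h1 u).sub (h2 u)
    simpa [inner_sub_left] using this
  have hPDweak : ∀ u : E, Tendsto (fun k => ⟪PD (x k - F (x k)), u⟫_ℝ) atTop
      (nhds ⟪xl - y, u⟫_ℝ) := by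
    intro u
    have hf0 : Tendsto (fun k => ⟪f k, u⟫_ℝ) atTop (nhds 0) := by
      have := Filter.Tendsto.inner (𝕜 := ℝ) h4 (tendsto_const_nhds (x := u))
      simpa using this
    have : Tendsto (fun k => ⟪x k - F (x k), u⟫_ℝ - ⟪f k, u⟫_ℝ) atTop
        (nhds (⟪xl - y, u⟫_ℝ - 0)) := (hxmFweak u).sub hf0
    rw [sub_zero] at this
    refine this.congr fun k => ?_
    simp only [hf, inner_sub_left]; ring
  have hdD : xl - y ∈ D :=
    weak_limit_mem D hDne hDconv PD hPD _ (fun k => (hPD _).1) (xl - y) hPDweak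
  refine ⟨hyC, ⟨xl - y, hdD, by abel⟩, ?_⟩
  -- boundedness
  obtain ⟨Mx, hMx⟩ := weak_conv_bounded x xl h1
  obtain ⟨Mz, hMz⟩ := weak_conv_bounded (fun k => F (x k)) y h2
  -- notation
  set A : ℕ → E := fun k => x k - F (x k) - (xl - y) with hA
  set P : ℕ → E := fun k => F (x k) - y with hP
  set B : E := F xl - y with hB
  -- key inequality from firm nonexpansiveness
  have key : ∀ k, ‖B‖ ^ 2 ≤ ⟪A k, P k⟫_ℝ + ⟪A k, y - F xl⟫_ℝ + ⟪B, P k⟫_ℝ := by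
    intro k
    have h5 := hF (x k) xl
    rw [← real_inner_self_eq_norm_sq] at h5
    have h6 : 0 ≤ ⟪(x k - xl) - (F (x k) - F xl), F (x k) - F xl⟫_ℝ := by
      rw [inner_sub_left]; linarith
    have e1 : (x k - xl) - (F (x k) - F xl) = A k + B := by
      simp only [hA, hB]; abel
    have e2 : F (x k) - F xl = P k + (y - F xl) := by
      simp only [hP]; abel
    rw [e1, e2, inner_add_left, inner_add_right, inner_add_right] at h6
    have e3 : ⟪B, y - F xl⟫_ℝ = -‖B‖ ^ 2 := by
      have : y - F xl = -B := by simp only [hB]; abel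
      rw [this, inner_neg_right, real_inner_self_eq_norm_sq]
    rw [e3] at h6
    linarith
  -- convergence of each term
  have t1 : Tendsto (fun k => ⟪A k, y - F xl⟫_ℝ) atTop (nhds 0) := by
    have : Tendsto (fun k => ⟪x k, y - F xl⟫_ℝ - ⟪F (x k), y - F xl⟫_ℝ
        - ⟪xl - y, y - F xl⟫_ℝ) atTop
        (nhds (⟪xl, y - F xl⟫_ℝ - ⟪y, y - F xl⟫_ℝ - ⟪xl - y, y - F xl⟫_ℝ)) :=
      ((h1 _).sub (h2 _)).sub tendsto_const_nhds
    have hval : ⟪xl, y - F xl⟫_ℝ - ⟪y, y - F xl⟫_ℝ - ⟪xl - y, y - F xl⟫_ℝ = 0 := by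
      rw [inner_sub_left]; ring
    rw [hval] at this
    refine this.congr fun k => ?_
    simp only [hA, inner_sub_left]
  have t2 : Tendsto (fun k => ⟪B, P k⟫_ℝ) atTop (nhds 0) := by
    have : Tendsto (fun k => ⟪F (x k), B⟫_ℝ - ⟪y, B⟫_ℝ) atTop
        (nhds (⟪y, B⟫_ℝ - ⟪y, B⟫_ℝ)) := (h2 B).sub tendsto_const_nhds
    rw [sub_self] at this
    refine this.congr fun k => ?_
    simp only [hP, inner_sub_right]
    rw [real_inner_comm (F (x k)) B, real_inner_comm y B]
  -- the orthogonality term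
  have hdk : ∀ k, PD (x k - F (x k)) - (xl - y) ∈ D - D := fun k =>
    Set.sub_mem_sub (hPD _).1 hdD
  have hck : ∀ k, PC (F (x k)) - y ∈ C - C := fun k =>
    Set.sub_mem_sub (hPC _).1 hyC
  have horth : ∀ k, ⟪PD (x k - F (x k)) - (xl - y), PC (F (x k)) - y⟫_ℝ = 0 := by
    intro k
    rw [real_inner_comm]
    have := hck k
    rw [hperp] at this
    exact this _ (hdk k)
  have t3 : Tendsto (fun k => ⟪A k, P k⟫_ℝ) atTop (nhds 0) := by
    have hAk : ∀ k, A k = (PD (x k - F (x k)) - (xl - y)) + f k := by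
      intro k; simp only [hA, hf]; abel
    have hPk : ∀ k, P k = (PC (F (x k)) - y) + e k := by
      intro k; simp only [hP, he]; abel
    have hsplit : ∀ k, ⟪A k, P k⟫_ℝ =
        ⟪PD (x k - F (x k)) - (xl - y), e k⟫_ℝ + ⟪f k, PC (F (x k)) - y⟫_ℝ
        + ⟪f k, e k⟫_ℝ := by
      intro k
      rw [hAk k, hPk k, inner_add_left, inner_add_right, inner_add_right, horth k]
      ring
    -- bounds
    have hdb : ∀ k, ‖PD (x k - F (x k)) - (xl - y)‖ ≤ Mx + Mz + ‖xl - y‖ + ‖f k‖ := by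
      intro k
      have : PD (x k - F (x k)) - (xl - y) = (x k - F (x k)) - (xl - y) - f k := by
        simp only [hf]; abel
      rw [this]
      calc ‖(x k - F (x k)) - (xl - y) - f k‖
          ≤ ‖(x k - F (x k)) - (xl - y)‖ + ‖f k‖ := norm_sub_le _ _
        _ ≤ (‖x k - F (x k)‖ + ‖xl - y‖) + ‖f k‖ := by
            gcongr; exact norm_sub_le _ _
        _ ≤ ((‖x k‖ + ‖F (x k)‖) + ‖xl - y‖) + ‖f k‖ := by
            gcongr; exact norm_sub_le _ _
        _ ≤ Mx + Mz + ‖xl - y‖ + ‖f k‖ := by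
            have hx1 := hMx k; have hx2 := hMz k; linarith
    have hcb : ∀ k, ‖PC (F (x k)) - y‖ ≤ Mz + ‖y‖ + ‖e k‖ := by
      intro k
      have : PC (F (x k)) - y = (F (x k) - y) - e k := by simp only [he]; abel
      rw [this]
      calc ‖(F (x k) - y) - e k‖ ≤ ‖F (x k) - y‖ + ‖e k‖ := norm_sub_le _ _
        _ ≤ (‖F (x k)‖ + ‖y‖) + ‖e k‖ := by gcongr; exact norm_sub_le _ _
        _ ≤ Mz + ‖y‖ + ‖e k‖ := by have := hMz k; linarith
    have hen : Tendsto (fun k => ‖e k‖) atTop (nhds 0) := by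
      simpa using h3.norm
    have hfn : Tendsto (fun k => ‖f k‖) atTop (nhds 0) := by
      simpa using h4.norm
    have s1 : Tendsto (fun k => ⟪PD (x k - F (x k)) - (xl - y), e k⟫_ℝ) atTop (nhds 0) := by
      refine squeeze_zero_norm
        (a := fun k => (Mx + Mz + ‖xl - y‖ + ‖f k‖) * ‖e k‖) (fun k => ?_) ?_
      · calc ‖⟪PD (x k - F (x k)) - (xl - y), e k⟫_ℝ‖
            ≤ ‖PD (x k - F (x k)) - (xl - y)‖ * ‖e k‖ := norm_inner_le_norm _ _
          _ ≤ (Mx + Mz + ‖xl - y‖ + ‖f k‖) * ‖e k‖ :=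
              mul_le_mul_of_nonneg_right (hdb k) (norm_nonneg _)
      · have : Tendsto (fun k => (Mx + Mz + ‖xl - y‖ + ‖f k‖) * ‖e k‖) atTop
            (nhds ((Mx + Mz + ‖xl - y‖ + 0) * 0)) :=
          (tendsto_const_nhds.add hfn).mul hen
        simpa using this
    have s2 : Tendsto (fun k => ⟪f k, PC (F (x k)) - y⟫_ℝ) atTop (nhds 0) := by
      refine squeeze_zero_norm
        (a := fun k => ‖f k‖ * (Mz + ‖y‖ + ‖e k‖)) (fun k => ?_) ?_
      · calc ‖⟪f k, PC (F (x k)) - y⟫_ℝ‖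
            ≤ ‖f k‖ * ‖PC (F (x k)) - y‖ := norm_inner_le_norm _ _
          _ ≤ ‖f k‖ * (Mz + ‖y‖ + ‖e k‖) :=
              mul_le_mul_of_nonneg_left (hcb k) (norm_nonneg _)
      · have : Tendsto (fun k => ‖f k‖ * (Mz + ‖y‖ + ‖e k‖)) atTop
            (nhds (0 * (Mz + ‖y‖ + 0))) := hfn.mul (tendsto_const_nhds.add hen)
        simpa using this
    have s3 : Tendsto (fun k => ⟪f k, e k⟫_ℝ) atTop (nhds 0) := by
      refine squeeze_zero_norm (fun k => norm_inner_le_norm _ _) ?_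
      simpa using hfn.mul hen
    have := (s1.add s2).add s3
    rw [show (0:ℝ) + 0 + 0 = 0 by ring] at this
    exact this.congr fun k => (hsplit k).symm
  -- conclude
  have tg : Tendsto (fun k => ⟪A k, P k⟫_ℝ + ⟪A k, y - F xl⟫_ℝ + ⟪B, P k⟫_ℝ) atTop
      (nhds 0) := by
    have := (t3.add t1).add t2
    rwa [show (0:ℝ) + 0 + 0 = 0 by ring] at this
  have hB2 : ‖B‖ ^ 2 ≤ 0 := ge_of_tendsto tg (Eventually.of_forall key)
  have hB0 : B = 0 := by
    have : ‖B‖ = 0 := by nlinarith [norm_nonneg B]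
    exact norm_eq_zero.mp this
  have : F xl = y := by rwa [hB, sub_eq_zero] at hB0
  exact this.symm
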